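/- Fix m ≥ 6. Let A be the m×(m+1) matrix whose rows 1 through m−1 have row i equal to 1 in columns i, i+1, i+2 and 0 elsewhere, and whose last row is (1,1,0,1,0,0,1,0,…,0). Let c = (3,3,…,3,4)ᵀ with m−1 threes followed by a 4. Then the all-ones vector of length m+1 is the unique solution over ℕ of A·x = c. -/

import Mathlib

lemma sum_ind {n : ℕ} (b : Fin n → ℕ) (k : ℕ) :
    (∑ j : Fin n, if (j : ℕ) = k then b j else 0)
      = if h : k < n then b ⟨k, h⟩ else 0 := by
  split
  · next h =>
    rw [Finset.sum_eq_single (⟨k, h⟩ : Fin n)]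
    · simp
    · intro j _ hj
      rw [if_neg]
      simpa [Fin.ext_iff] using hj
    · simp
  · next h =>
    apply Finset.sum_eq_zero
    intro j _
    have := j.isLt
    rw [if_neg]
    omega

theorem unique_nat_solution_all_ones (m : ℕ) (hm : 6 ≤ m)
    (A : Matrix (Fin m) (Fin (m + 1)) ℕ)
    (hA : ∀ i j, A i j =
      if (i : ℕ) + 1 < m then
        (if (j : ℕ) = i ∨ (j : ℕ) = (i : ℕ) + 1 ∨ (j : ℕ) = (i : ℕ) + 2 then 1 else 0)
      else
        (if (j : ℕ) = 0 ∨ (j : ℕ) = 1 ∨ (j : ℕ) = 3 ∨ (j : ℕ) = 6 then 1 else 0))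
    (c : Fin m → ℕ)
    (hc : ∀ i, c i = if (i : ℕ) + 1 < m then 3 else 4) :
    ∀ b : Fin (m + 1) → ℕ, A.mulVec b = c ↔ b = fun _ => 1 := by
  intro b
  set g : ℕ → ℕ := fun k => if h : k < m + 1 then b ⟨k, h⟩ else 0 with hgdef
  have hrow3 : ∀ i : Fin m, (i : ℕ) + 1 < m →
      A.mulVec b i = g i + g ((i : ℕ) + 1) + g ((i : ℕ) + 2) := by
    intro i hi
    simp only [Matrix.mulVec, dotProduct, hA,
      show ((i : ℕ) + 1 < m) = True from eq_true hi, if_true, ite_mul, one_mul, zero_mul]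
    have split : ∀ j : Fin (m + 1),
        (if (j : ℕ) = i ∨ (j : ℕ) = (i : ℕ) + 1 ∨ (j : ℕ) = (i : ℕ) + 2 then b j else 0)
        = (if (j : ℕ) = (i : ℕ) then b j else 0) + (if (j : ℕ) = (i : ℕ) + 1 then b j else 0)
          + (if (j : ℕ) = (i : ℕ) + 2 then b j else 0) := by
      intro j
      by_cases h1 : (j : ℕ) = (i : ℕ) <;> by_cases h2 : (j : ℕ) = (i : ℕ) + 1 <;>
        by_cases h3 : (j : ℕ) = (i : ℕ) + 2 <;> simp [h1, h2, h3] <;> omega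
    rw [Finset.sum_congr rfl (fun j _ => split j), Finset.sum_add_distrib,
      Finset.sum_add_distrib, sum_ind, sum_ind, sum_ind]
  have hrow4 : ∀ i : Fin m, ¬ ((i : ℕ) + 1 < m) →
      A.mulVec b i = g 0 + g 1 + g 3 + g 6 := by
    intro i hi
    simp only [Matrix.mulVec, dotProduct, hA,
      show ((i : ℕ) + 1 < m) = False from eq_false hi, if_false, ite_mul, one_mul, zero_mul]
    have split : ∀ j : Fin (m + 1),
        (if (j : ℕ) = 0 ∨ (j : ℕ) = 1 ∨ (j : ℕ) = 3 ∨ (j : ℕ) = 6 then b j else 0)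
        = (if (j : ℕ) = 0 then b j else 0) + (if (j : ℕ) = 1 then b j else 0)
          + (if (j : ℕ) = 3 then b j else 0) + (if (j : ℕ) = 6 then b j else 0) := by
      intro j
      by_cases h1 : (j : ℕ) = 0 <;> by_cases h2 : (j : ℕ) = 1 <;>
        by_cases h3 : (j : ℕ) = 3 <;> by_cases h4 : (j : ℕ) = 6 <;>
        simp [h1, h2, h3, h4] <;> omega
    rw [Finset.sum_congr rfl (fun j _ => split j), Finset.sum_add_distrib,
      Finset.sum_add_distrib, Finset.sum_add_distrib, sum_ind, sum_ind, sum_ind, sum_ind]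
  constructor
  · intro h
    have key3 : ∀ k : ℕ, k + 2 ≤ m → g k + g (k + 1) + g (k + 2) = 3 := by
      intro k hk
      have hi : k < m := by omega
      have h1 := congrFun h ⟨k, hi⟩
      rw [hrow3 ⟨k, hi⟩ (by simpa using by omega : ((⟨k, hi⟩ : Fin m) : ℕ) + 1 < m), hc] at h1
      simpa [show k + 1 < m from by omega] using h1
    have key4 : g 0 + g 1 + g 3 + g 6 = 4 := by
      have hi : m - 1 < m := by omega
      have h1 := congrFun h ⟨m - 1, hi⟩
      rw [hrow4 ⟨m - 1, hi⟩ (by simp; omega), hc] at h1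
      simpa [show ¬ (m - 1 + 1 < m) by omega] using h1
    have hstep : ∀ k : ℕ, k + 3 ≤ m → g k = g (k + 3) := by
      intro k hk
      have h1 := key3 k (by omega)
      have h2 : g (k + 1) + g (k + 2) + g (k + 3) = 3 := key3 (k + 1) (by omega)
      omega
    have h3 : g 3 = g 0 := (hstep 0 (by omega)).symm
    have h6 : g 6 = g 3 := (hstep 3 (by omega)).symm
    have h012 : g 0 = 1 ∧ g 1 = 1 ∧ g 2 = 1 := by
      have h0 : g 0 + g 1 + g 2 = 3 := key3 0 (by omega)
      omega
    have hmod : ∀ k : ℕ, k ≤ m → g k = g (k % 3) := by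
      intro k
      induction k using Nat.strong_induction_on with
      | _ k ih =>
        intro hk
        by_cases h : k < 3
        · rw [Nat.mod_eq_of_lt h]
        · have e1 : g (k - 3) = g (k - 3 + 3) := hstep (k - 3) (by omega)
          have e2 : g (k - 3) = g ((k - 3) % 3) := ih (k - 3) (by omega) (by omega)
          have e3 : (k - 3) % 3 = k % 3 := by omega
          rw [show k - 3 + 3 = k by omega] at e1
          rw [← e1, e2, e3]
    funext j
    have hb : b j = g (j : ℕ) := by
      simp [hgdef, j.isLt]
      intro h; have := j.isLt; omega
    rw [hb, hmod (j : ℕ) (by have := j.isLt; omega)]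
    have : (j : ℕ) % 3 = 0 ∨ (j : ℕ) % 3 = 1 ∨ (j : ℕ) % 3 = 2 := by omega
    rcases this with h | h | h <;> rw [h] <;> omega
  · intro hb
    subst hb
    have hg1 : ∀ k : ℕ, k < m + 1 → g k = 1 := by
      intro k hk
      simp [hgdef, hk]
      omega
    funext i
    rw [hc]
    by_cases hi : (i : ℕ) + 1 < m
    · rw [hrow3 i hi, if_pos hi]
      have := i.isLt
      have e0 := hg1 (i : ℕ) (by omega)
      have e1 := hg1 ((i : ℕ) + 1) (by omega)
      have e2 := hg1 ((i : ℕ) + 2) (by omega)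
      omega
    · rw [hrow4 i hi, if_neg hi]
      have e0 := hg1 0 (by omega)
      have e1 := hg1 1 (by omega)
      have e3 := hg1 3 (by omega)
      have e6 := hg1 6 (by omega)
      omega
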